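/- Let A be a Banach *-algebra of the form C₀(U, L¹(ℝᵈ)) where U is a locally compact Hausdorff space. Then every nonzero irreducible *-representation π of A on a Hilbert space factors through evaluation at some point x ∈ U followed by an irreducible *-representation of L¹(ℝᵈ). Consequently the enveloping C*-algebra of C₀(U, L¹(ℝᵈ)) is C₀(U, C*(ℝᵈ)). -/

import Mathlib

open Filter Topology Set ZeroAtInftyContinuousMap

section Aux

variable {U : Type*} [TopologicalSpace U]
variable {B : Type*} [NonUnitalNormedRing B] [NormedSpace ℂ B]

/-- Multiply a `C₀` function by a `[0,1]`-valued continuous scalar function. -/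
noncomputable def scalMulC0 (φ : C(U, ℝ)) (hφ : ∀ u, φ u ∈ Set.Icc (0 : ℝ) 1)
    (f : ZeroAtInftyContinuousMap U B) : ZeroAtInftyContinuousMap U B where
  toFun u := (φ u : ℂ) • f u
  continuous_toFun := (Complex.continuous_ofReal.comp φ.continuous).smul (map_continuous f)
  zero_at_infty' := by
    refine squeeze_zero_norm (fun u => ?_)
      (tendsto_zero_iff_norm_tendsto_zero.mp (zero_at_infty f))
    rw [norm_smul, Complex.norm_real, Real.norm_eq_abs]
    have h1 : |φ u| ≤ 1 := abs_le.mpr ⟨by linarith [(hφ u).1], (hφ u).2⟩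
    calc |φ u| * ‖f u‖ ≤ 1 * ‖f u‖ := mul_le_mul_of_nonneg_right h1 (norm_nonneg _)
      _ = ‖f u‖ := one_mul _

@[simp] lemma scalMulC0_apply (φ : C(U, ℝ)) (hφ : ∀ u, φ u ∈ Set.Icc (0 : ℝ) 1)
    (f : ZeroAtInftyContinuousMap U B) (u : U) :
    scalMulC0 φ hφ f u = (φ u : ℂ) • f u := rfl

lemma tsupport_scalMulC0_subset (φ : C(U, ℝ)) (hφ : ∀ u, φ u ∈ Set.Icc (0 : ℝ) 1)
    (f : ZeroAtInftyContinuousMap U B) :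
    tsupport ⇑(scalMulC0 φ hφ f) ⊆ tsupport ⇑φ := by
  refine closure_mono fun u hu => ?_
  simp only [Function.mem_support] at hu ⊢
  intro h0
  exact hu (by simp [h0])

/-- The `C₀` function `u ↦ φ u • b` for a compactly supported scalar function `φ`. -/
noncomputable def constC0 (φ : C(U, ℝ)) (hφc : HasCompactSupport φ) (b : B) :
    ZeroAtInftyContinuousMap U B where
  toFun u := (φ u : ℂ) • b
  continuous_toFun := (Complex.continuous_ofReal.comp φ.continuous).smul continuous_const
  zero_at_infty' := by
    refine Filter.Tendsto.congr' ?_ (tendsto_const_nhds (x := (0 : B)))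
    filter_upwards [mem_cocompact.mpr ⟨tsupport φ, hφc, Subset.rfl⟩] with u hu
    rw [image_eq_zero_of_notMem_tsupport hu]
    simp

@[simp] lemma constC0_apply (φ : C(U, ℝ)) (hφc : HasCompactSupport φ) (b : B) (u : U) :
    constC0 φ hφc b u = (φ u : ℂ) • b := rfl

lemma C0_norm_le {ε : ℝ} (hε : 0 ≤ ε) (f : ZeroAtInftyContinuousMap U B)
    (h : ∀ u, ‖f u‖ ≤ ε) : ‖f‖ ≤ ε := by
  rw [← ZeroAtInftyContinuousMap.norm_toBCF_eq_norm]
  exact (BoundedContinuousFunction.norm_le hε).mpr h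

lemma norm_scalMulC0_le (φ : C(U, ℝ)) (hφ : ∀ u, φ u ∈ Set.Icc (0 : ℝ) 1)
    (f : ZeroAtInftyContinuousMap U B) {ε : ℝ} (hε : 0 ≤ ε)
    (h : ∀ u ∈ tsupport ⇑φ, ‖f u‖ ≤ ε) : ‖scalMulC0 φ hφ f‖ ≤ ε := by
  refine C0_norm_le hε _ fun u => ?_
  by_cases hu : u ∈ tsupport ⇑φ
  · rw [scalMulC0_apply, norm_smul, Complex.norm_real, Real.norm_eq_abs]
    have h1 : |φ u| ≤ 1 := abs_le.mpr ⟨by linarith [(hφ u).1], (hφ u).2⟩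
    calc |φ u| * ‖f u‖ ≤ 1 * ε :=
          mul_le_mul h1 (h u hu) (norm_nonneg _) zero_le_one
      _ = ε := one_mul _
  · have h0 : φ u = 0 := image_eq_zero_of_notMem_tsupport hu
    simp [h0, hε]

lemma coe_finset_sum {ι : Type*} (s : Finset ι) (g : ι → ZeroAtInftyContinuousMap U B) :
    ⇑(∑ i ∈ s, g i) = ∑ i ∈ s, ⇑(g i) := by
  classical
  induction s using Finset.cons_induction with
  | empty => simp
  | cons a s ha ih => rw [Finset.sum_cons, Finset.sum_cons, ZeroAtInftyContinuousMap.coe_add, ih]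

end Aux

set_option maxHeartbeats 2000000 in
/-- Every nonzero irreducible `*`-representation of the Banach `*`-algebra
`C₀(U, B)` (with `B` playing the role of `L¹(ℝᵈ)`) on a Hilbert space factors through
evaluation at some point `x ∈ U` followed by an irreducible `*`-representation of `B`;
this is the key step showing that the enveloping C*-algebra of `C₀(U, L¹(ℝᵈ))` is
`C₀(U, C*(ℝᵈ))`. -/
theorem irreducible_rep_of_C0_factors
    {U : Type*} [TopologicalSpace U] [LocallyCompactSpace U] [T2Space U]
    {B : Type*} [NonUnitalNormedRing B] [StarRing B] [NormedStarGroup B]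
    [NormedSpace ℂ B] [IsScalarTower ℂ B B] [SMulCommClass ℂ B B] [StarModule ℂ B]
    {H : Type*} [NormedAddCommGroup H] [InnerProductSpace ℂ H] [CompleteSpace H]
    (π : ZeroAtInftyContinuousMap U B →⋆ₙₐ[ℂ] (H →L[ℂ] H))
    -- `*`-representations of a Banach `*`-algebra are norm-decreasing
    (hcontr : ∀ f, ‖π f‖ ≤ ‖f‖)
    (hnz : ∃ f, π f ≠ 0)
    -- irreducibility: no nontrivial closed invariant subspaces
    (hirr : ∀ K : Submodule ℂ H, IsClosed (K : Set H) →
      (∀ f, ∀ v ∈ K, π f v ∈ K) → K = ⊥ ∨ K = ⊤) :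
    ∃ x : U, ∃ ρ : B →⋆ₙₐ[ℂ] (H →L[ℂ] H),
      (∀ b, ‖ρ b‖ ≤ ‖b‖) ∧
      (∀ K : Submodule ℂ H, IsClosed (K : Set H) →
        (∀ b, ∀ v ∈ K, ρ b v ∈ K) → K = ⊥ ∨ K = ⊤) ∧
      ∀ f, π f = ρ (f x) := by
  classical
  -- Step A: there is a point near which `π` does not vanish.
  have hP : ∃ x : U, ∀ V : Set U, IsOpen V → x ∈ V →
      ∃ h : ZeroAtInftyContinuousMap U B, tsupport ⇑h ⊆ V ∧ π h ≠ 0 := by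
    by_contra hcon
    push_neg at hcon
    choose V hVopen hVmem hVkill using hcon
    obtain ⟨f₀, hf₀⟩ := hnz
    refine hf₀ ?_
    have key : ∀ f : ZeroAtInftyContinuousMap U B, ∀ ε : ℝ, 0 < ε → ‖π f‖ ≤ ε := by
      intro f ε hε
      have hball : ⇑f ⁻¹' Metric.ball 0 ε ∈ cocompact U :=
        (zero_at_infty f) (Metric.ball_mem_nhds 0 hε)
      obtain ⟨Kc, hKc, hKsub⟩ := mem_cocompact.mp hball
      set C : Set U := {u | ε ≤ ‖f u‖} with hC
      have hCclosed : IsClosed C := isClosed_le continuous_const ((map_continuous f).norm)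
      have hCK : C ⊆ Kc := by
        intro u hu
        by_contra hn
        have h2 := hKsub hn
        simp only [Set.mem_preimage, Metric.mem_ball, dist_zero_right] at h2
        exact absurd (show ε ≤ ‖f u‖ from hu) (not_le.mpr h2)
      have hCc : IsCompact C := hKc.of_isClosed_subset hCclosed hCK
      obtain ⟨t, ht⟩ := hCc.elim_finite_subcover V hVopen
        (fun u _ => Set.mem_iUnion.mpr ⟨u, hVmem u⟩)
      have hcover : C ⊆ ⋃ i : {y // y ∈ t}, V i.1 := by
        intro u hu
        obtain ⟨i, hi, hmem⟩ := Set.mem_iUnion₂.mp (ht hu)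
        exact Set.mem_iUnion.mpr ⟨⟨i, hi⟩, hmem⟩
      obtain ⟨po, hsub, -⟩ := PartitionOfUnity.exists_isSubordinate_of_locallyFinite_t2space
        hCc (fun i : {y // y ∈ t} => V i.1) (fun i => hVopen i.1)
        (locallyFinite_of_finite _) hcover
      have hle : ∀ (i : {y // y ∈ t}) (u : U), po i u ∈ Set.Icc (0 : ℝ) 1 :=
        fun i u => ⟨po.nonneg i u, po.le_one i u⟩
      set Φ : C(U, ℝ) := ∑ i : {y // y ∈ t}, (po i : C(U, ℝ)) with hΦdef
      have hΦval : ∀ u, Φ u = ∑ i : {y // y ∈ t}, po i u := by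
        intro u; rw [hΦdef, ContinuousMap.coe_sum, Finset.sum_apply]
      have hΦIcc : ∀ u, Φ u ∈ Set.Icc (0 : ℝ) 1 := by
        intro u
        rw [hΦval]
        refine ⟨Finset.sum_nonneg fun i _ => po.nonneg i u, ?_⟩
        have h1 := po.sum_le_one u
        rwa [finsum_eq_sum_of_fintype] at h1
      have hΦ1 : ∀ u ∈ C, Φ u = 1 := by
        intro u hu
        rw [hΦval]
        have h1 := po.sum_eq_one hu
        rwa [finsum_eq_sum_of_fintype] at h1
      have hkill : π (scalMulC0 Φ hΦIcc f) = 0 := by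
        have hdecomp : scalMulC0 Φ hΦIcc f
            = ∑ i : {y // y ∈ t}, scalMulC0 (po i) (hle i) f := by
          ext u
          rw [show ((∑ i : {y // y ∈ t}, scalMulC0 (po i) (hle i) f) u)
              = ∑ i : {y // y ∈ t}, (scalMulC0 (po i) (hle i) f) u by
            rw [coe_finset_sum, Finset.sum_apply]]
          simp only [scalMulC0_apply]
          rw [hΦval]
          push_cast
          rw [Finset.sum_smul]
        rw [hdecomp, map_sum]
        refine Finset.sum_eq_zero fun i _ => ?_
        exact hVkill i.1 _ ((tsupport_scalMulC0_subset _ _ _).trans (hsub i))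
      have hest : ‖f - scalMulC0 Φ hΦIcc f‖ ≤ ε := by
        refine C0_norm_le hε.le _ fun u => ?_
        have hval : (f - scalMulC0 Φ hΦIcc f) u = ((1 - Φ u : ℝ) : ℂ) • f u := by
          rw [ZeroAtInftyContinuousMap.coe_sub, Pi.sub_apply, scalMulC0_apply]
          push_cast
          rw [sub_smul, one_smul]
        rw [hval, norm_smul, Complex.norm_real, Real.norm_eq_abs]
        by_cases hu : u ∈ C
        · rw [hΦ1 u hu]
          simpa using hε.le
        · have h1 : |1 - Φ u| ≤ 1 := by
            have h2 := hΦIcc u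
            rw [abs_le]
            constructor <;> [linarith [h2.2]; linarith [h2.1]]
          have h2 : ‖f u‖ ≤ ε := le_of_not_ge hu
          calc |1 - Φ u| * ‖f u‖ ≤ 1 * ε :=
                mul_le_mul h1 h2 (norm_nonneg _) zero_le_one
            _ = ε := one_mul _
      calc ‖π f‖ = ‖π (f - scalMulC0 Φ hΦIcc f)‖ := by rw [map_sub, hkill, sub_zero]
        _ ≤ ‖f - scalMulC0 Φ hΦIcc f‖ := hcontr _
        _ ≤ ε := hest
    have h0 : ‖π f₀‖ ≤ 0 :=
      le_of_forall_pos_le_add fun ε hε => by simpa using key f₀ ε hε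
    exact norm_le_zero_iff.mp h0
  obtain ⟨x, hx⟩ := hP
  -- Step B1: `π` kills functions vanishing on a neighborhood of `x`.
  have B1 : ∀ (g : ZeroAtInftyContinuousMap U B) (W : Set U), IsOpen W → x ∈ W →
      (∀ u ∈ W, g u = 0) → π g = 0 := by
    intro g W hWopen hxW hgW
    set S : Set H := {w | ∃ h : ZeroAtInftyContinuousMap U B, ∃ v : H,
      tsupport ⇑h ⊆ W ∧ π h v = w} with hS
    set K := (Submodule.span ℂ S).topologicalClosure with hK
    have hKcoe : (K : Set H) = closure ((Submodule.span ℂ S : Submodule ℂ H) : Set H) := rfl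
    have hKclosed : IsClosed (K : Set H) := Submodule.isClosed_topologicalClosure _
    have hKinv : ∀ f, ∀ v ∈ K, π f v ∈ K := by
      intro f v hv
      have hmaple : (Submodule.span ℂ S).map ((π f : H →L[ℂ] H) : H →ₗ[ℂ] H)
          ≤ Submodule.span ℂ S := by
        rw [Submodule.map_span_le]
        rintro w ⟨h, v', hsupp, rfl⟩
        refine Submodule.subset_span ⟨f * h, v', ?_, ?_⟩
        · refine Subset.trans (closure_mono fun u hu => ?_) hsupp
          simp only [Function.mem_support] at hu ⊢
          intro h0
          apply hu
          rw [ZeroAtInftyContinuousMap.coe_mul, Pi.mul_apply, h0, mul_zero]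
        · rw [map_mul]; rfl
      have hmap : Set.MapsTo ⇑(π f) ((Submodule.span ℂ S : Submodule ℂ H) : Set H)
          ((Submodule.span ℂ S : Submodule ℂ H) : Set H) :=
        fun w hw => hmaple (Submodule.mem_map_of_mem hw)
      have hclos := hmap.closure (π f).continuous
      exact hclos hv
    rcases hirr K hKclosed hKinv with hbot | htop
    · exfalso
      obtain ⟨h, hhsupp, hhne⟩ := hx W hWopen hxW
      obtain ⟨v, hv⟩ : ∃ v, π h v ≠ 0 := by
        by_contra hvz; push_neg at hvz
        exact hhne (ContinuousLinearMap.ext fun v => by simp [hvz v])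
      have hmem : π h v ∈ K :=
        Submodule.le_topologicalClosure _ (Submodule.subset_span ⟨h, v, hhsupp, rfl⟩)
      rw [hbot] at hmem
      exact hv ((Submodule.mem_bot ℂ).mp hmem)
    · have hker : K ≤ LinearMap.ker ((π g : H →L[ℂ] H) : H →ₗ[ℂ] H) := by
        refine Submodule.topologicalClosure_minimal _ ?_ (ContinuousLinearMap.isClosed_ker (π g))
        rw [Submodule.span_le]
        rintro w ⟨h, v, hsupp, rfl⟩
        rw [SetLike.mem_coe, LinearMap.mem_ker]
        have hgh : g * h = 0 := by
          ext u
          rw [ZeroAtInftyContinuousMap.coe_mul, Pi.mul_apply]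
          by_cases hu : u ∈ W
          · rw [hgW u hu, zero_mul]; rfl
          · rw [image_eq_zero_of_notMem_tsupport (fun hc => hu (hsupp hc)), mul_zero]; rfl
        calc (π g) ((π h) v) = π (g * h) v := by rw [map_mul]; rfl
          _ = 0 := by rw [hgh, map_zero]; rfl
      have hkertop : LinearMap.ker ((π g : H →L[ℂ] H) : H →ₗ[ℂ] H) = ⊤ :=
        top_unique (htop ▸ hker)
      refine ContinuousLinearMap.ext fun v => ?_
      have : v ∈ LinearMap.ker ((π g : H →L[ℂ] H) : H →ₗ[ℂ] H) := hkertop ▸ Submodule.mem_top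
      simpa using this
  -- Step B2: `π` kills functions vanishing at `x`.
  have B2 : ∀ g : ZeroAtInftyContinuousMap U B, g x = 0 → π g = 0 := by
    intro g hg
    have hbound : ∀ ε : ℝ, 0 < ε → ‖π g‖ ≤ ε := by
      intro ε hε
      set W : Set U := {u | ‖g u‖ < ε} with hW
      have hWopen : IsOpen W := isOpen_lt ((map_continuous g).norm) continuous_const
      have hxW : x ∈ W := by simp [hW, hg, hε]
      obtain ⟨K₀, hK₀c, hxK₀, hK₀W⟩ := exists_compact_subset hWopen hxW
      obtain ⟨φ, hφ1, hφ0, hφcs, hφIcc⟩ := exists_continuous_one_zero_of_isCompact hK₀c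
        hWopen.isClosed_compl (Set.disjoint_left.mpr fun u hu hc => hc (hK₀W hu))
      have hvanish : π (g - scalMulC0 φ hφIcc g) = 0 := by
        refine B1 _ (interior K₀) isOpen_interior hxK₀ fun u hu => ?_
        have h1 : φ u = 1 := hφ1 (interior_subset hu)
        rw [ZeroAtInftyContinuousMap.coe_sub, Pi.sub_apply, scalMulC0_apply, h1]
        simp
      have hnorm : ‖scalMulC0 φ hφIcc g‖ ≤ ε := by
        refine norm_scalMulC0_le _ _ _ hε.le fun u hu => ?_
        have hsupp : Function.support ⇑φ ⊆ W := fun u' hu' => by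
          by_contra hc; exact hu' (hφ0 hc)
        have hclosW : closure W ⊆ {u | ‖g u‖ ≤ ε} :=
          closure_minimal (fun u' hu' => show ‖g u'‖ ≤ ε from le_of_lt hu')
            (isClosed_le ((map_continuous g).norm) continuous_const)
        exact hclosW ((closure_mono hsupp) hu)
      rw [map_sub] at hvanish
      have hgs : π g = π (scalMulC0 φ hφIcc g) := sub_eq_zero.mp hvanish
      calc ‖π g‖ = ‖π (scalMulC0 φ hφIcc g)‖ := by rw [hgs]
        _ ≤ ‖scalMulC0 φ hφIcc g‖ := hcontr _
        _ ≤ ε := hnorm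
    have h0 : ‖π g‖ ≤ 0 :=
      le_of_forall_pos_le_add fun ε hε => by simpa using hbound ε hε
    exact norm_le_zero_iff.mp h0
  -- Step C: bump function at `x` and the representation `ρ`.
  obtain ⟨K₁, hK₁c, hxK₁, -⟩ := exists_compact_subset isOpen_univ (Set.mem_univ x)
  obtain ⟨φ, hφ1, -, hφcs, hφIcc⟩ := exists_continuous_one_zero_of_isCompact hK₁c
    isClosed_empty (Set.disjoint_empty _)
  have hφx : φ x = 1 := hφ1 (interior_subset hxK₁)
  have hfactor : ∀ f : ZeroAtInftyContinuousMap U B,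
      π f = π (constC0 φ hφcs (f x)) := by
    intro f
    have h0 : π (f - constC0 φ hφcs (f x)) = 0 := by
      refine B2 _ ?_
      rw [ZeroAtInftyContinuousMap.coe_sub, Pi.sub_apply, constC0_apply, hφx]
      simp
    rw [map_sub] at h0
    exact sub_eq_zero.mp h0
  refine ⟨x,
    { toFun := fun b => π (constC0 φ hφcs b)
      map_smul' := fun c b => by
        have h : constC0 φ hφcs (c • b) = c • constC0 φ hφcs b := by
          ext u
          rw [constC0_apply, ZeroAtInftyContinuousMap.coe_smul, Pi.smul_apply, constC0_apply,
            smul_comm]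
        show π (constC0 φ hφcs (c • b)) = _
        rw [h, map_smul]
        rfl
      map_zero' := by
        have h : constC0 φ hφcs (0 : B) = 0 := by
          ext u
          simp
        show π (constC0 φ hφcs (0 : B)) = 0
        rw [h, map_zero]
      map_add' := fun b c => by
        have h : constC0 φ hφcs (b + c) = constC0 φ hφcs b + constC0 φ hφcs c := by
          ext u
          rw [constC0_apply, ZeroAtInftyContinuousMap.coe_add, Pi.add_apply, constC0_apply,
            constC0_apply, smul_add]
        show π (constC0 φ hφcs (b + c)) = _
        rw [h, map_add]
      map_mul' := fun b c => by
        have hx' : (constC0 φ hφcs b * constC0 φ hφcs c) x = b * c := by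
          rw [ZeroAtInftyContinuousMap.coe_mul, Pi.mul_apply, constC0_apply, constC0_apply,
            hφx]
          push_cast
          rw [one_smul, one_smul]
        show π (constC0 φ hφcs (b * c)) = _
        rw [← map_mul π]
        conv_rhs => rw [hfactor (constC0 φ hφcs b * constC0 φ hφcs c), hx']
      map_star' := fun b => by
        have h : constC0 φ hφcs (star b) = star (constC0 φ hφcs b) := by
          ext u
          rw [ZeroAtInftyContinuousMap.star_apply, constC0_apply, constC0_apply, star_smul,
            Complex.star_def, Complex.conj_ofReal]
        show π (constC0 φ hφcs (star b)) = _
        rw [h, map_star]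
    }, ?_, ?_, hfactor⟩
  · intro b
    refine le_trans (hcontr _) (C0_norm_le (norm_nonneg b) _ fun u => ?_)
    rw [constC0_apply, norm_smul, Complex.norm_real, Real.norm_eq_abs]
    have h1 : |φ u| ≤ 1 := abs_le.mpr ⟨by linarith [(hφIcc u).1], (hφIcc u).2⟩
    calc |φ u| * ‖b‖ ≤ 1 * ‖b‖ := mul_le_mul_of_nonneg_right h1 (norm_nonneg _)
      _ = ‖b‖ := one_mul _
  · intro K hKc hKinv
    refine hirr K hKc fun f v hv => ?_
    rw [hfactor f]
    exact hKinv (f x) v hv
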